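/- arXiv:1806.05340 — 2 statements merged into one kernel-verified Lean document; each statement's English description precedes it below -/
import Mathlib

section
/- Let F_a and F_b be real polynomials of total degree at most 2 in two variables and p = (c,d) ∈ ℝ². If (u,v) ∈ ℝ² is such that G₂ is nonzero at (u,v) and G₂ is nonzero at ι_p(u,v), then ι_p(ι_p(u,v)) = (u,v); that is, the generalised Manin involution with degree parameter D = 2 is an involution wherever it is defined. -/
open MvPolynomial

/-- Evaluation of a bivariate polynomial at a point of the plane. -/
noncomputable def pev (F : MvPolynomial (Fin 2) ℝ) (w : ℝ × ℝ) : ℝ :=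
  eval ![w.1, w.2] F

/-- First directional quantity `F⁽¹⁾ = (c−u)Fᵤ + (d−v)Fᵥ` at `w = (u,v)`, direction point `p = (c,d)`. -/
noncomputable def d1 (F : MvPolynomial (Fin 2) ℝ) (p w : ℝ × ℝ) : ℝ :=
  (p.1 - w.1) * pev (pderiv (0 : Fin 2) F) w + (p.2 - w.2) * pev (pderiv (1 : Fin 2) F) w

/-- Second directional quantity `F⁽²⁾` at `w = (u,v)`, direction point `p = (c,d)`. -/
noncomputable def d2 (F : MvPolynomial (Fin 2) ℝ) (p w : ℝ × ℝ) : ℝ :=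
  (p.1 - w.1) ^ 2 * pev (pderiv (0 : Fin 2) (pderiv (0 : Fin 2) F)) w
    + 2 * (p.1 - w.1) * (p.2 - w.2) * pev (pderiv (1 : Fin 2) (pderiv (0 : Fin 2) F)) w
    + (p.2 - w.2) ^ 2 * pev (pderiv (1 : Fin 2) (pderiv (1 : Fin 2) F)) w

/-- `G₁ = F_a·F_b⁽¹⁾ − F_a⁽¹⁾·F_b`. -/
noncomputable def G1 (Fa Fb : MvPolynomial (Fin 2) ℝ) (p w : ℝ × ℝ) : ℝ :=
  pev Fa w * d1 Fb p w - d1 Fa p w * pev Fb w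

/-- `G₂ = F_a·F_b⁽²⁾ − F_a⁽²⁾·F_b`. -/
noncomputable def G2 (Fa Fb : MvPolynomial (Fin 2) ℝ) (p w : ℝ × ℝ) : ℝ :=
  pev Fa w * d2 Fb p w - d2 Fa p w * pev Fb w

/-- The defining denominator `2(2−D)G₁ − G₂` of the generalised Manin involution. -/
noncomputable def den (Fa Fb : MvPolynomial (Fin 2) ℝ) (D : ℕ) (p w : ℝ × ℝ) : ℝ :=
  2 * (2 - (D : ℝ)) * G1 Fa Fb p w - G2 Fa Fb p w

/-- The generalised Manin involution `ι_p(u,v) = (u,v) + z·(p − (u,v))`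
with `z = 2G₁ / (2(2−D)G₁ − G₂)`. -/
noncomputable def manin (Fa Fb : MvPolynomial (Fin 2) ℝ) (D : ℕ) (p w : ℝ × ℝ) : ℝ × ℝ :=
  w + (2 * G1 Fa Fb p w / den Fa Fb D p w) • (p - w)

/-- Taylor property along lines, for quadratics. -/
def Good (F : MvPolynomial (Fin 2) ℝ) : Prop := ∀ p w : ℝ × ℝ, ∀ t : ℝ,
  pev F (w + t • (p - w)) = pev F w + t * d1 F p w + t^2/2 * d2 F p w ∧
  d1 F p (w + t • (p - w)) = (1-t) * (d1 F p w + t * d2 F p w) ∧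
  d2 F p (w + t • (p - w)) = (1-t)^2 * d2 F p w

lemma pderiv_two (i : Fin 2) : pderiv i (2 : MvPolynomial (Fin 2) ℝ) = 0 := by
  rw [← map_ofNat (C : ℝ →+* MvPolynomial (Fin 2) ℝ) 2, pderiv_C]

lemma good_basis (a b : ℕ) (hab : a + b ≤ 2) (c : ℝ) :
    Good (C c * (X 0 ^ a * X 1 ^ b)) := by
  intro p w t
  have ha : a ≤ 2 := le_trans (Nat.le_add_right _ _) hab
  have hb : b ≤ 2 := le_trans (Nat.le_add_left _ _) hab
  interval_cases a <;> interval_cases b <;>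
    first
    | (exfalso; omega)
    | refine ⟨?_, ?_, ?_⟩ <;>
      simp [pev, d1, d2, pderiv_mul, pderiv_pow, pderiv_two, pderiv_X_self,
        pderiv_X_of_ne (show (1:Fin 2) ≠ 0 by decide),
        pderiv_X_of_ne (show (0:Fin 2) ≠ 1 by decide), Prod.fst_add, Prod.snd_add,
        Prod.fst_sub, Prod.snd_sub, smul_eq_mul] <;> ring

lemma pev_add (F G : MvPolynomial (Fin 2) ℝ) (w : ℝ × ℝ) :
    pev (F + G) w = pev F w + pev G w := by simp [pev]

lemma d1_add (F G : MvPolynomial (Fin 2) ℝ) (p w : ℝ × ℝ) :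
    d1 (F + G) p w = d1 F p w + d1 G p w := by
  simp [d1, pev, map_add]; ring

lemma d2_add (F G : MvPolynomial (Fin 2) ℝ) (p w : ℝ × ℝ) :
    d2 (F + G) p w = d2 F p w + d2 G p w := by
  simp [d2, pev, map_add]; ring

lemma good_zero : Good 0 := by
  intro p w t
  refine ⟨?_, ?_, ?_⟩ <;> simp [pev, d1, d2]

lemma good_add {F G : MvPolynomial (Fin 2) ℝ} (hF : Good F) (hG : Good G) :
    Good (F + G) := by
  intro p w t
  obtain ⟨h1, h2, h3⟩ := hF p w t
  obtain ⟨g1, g2, g3⟩ := hG p w t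
  refine ⟨?_, ?_, ?_⟩ <;>
    simp only [pev_add, d1_add, d2_add, h1, h2, h3, g1, g2, g3] <;> ring

lemma good_monomial (v : Fin 2 →₀ ℕ) (hv : v 0 + v 1 ≤ 2) (c : ℝ) :
    Good (monomial v c) := by
  have hv' : v = Finsupp.single 0 (v 0) + Finsupp.single 1 (v 1) := by
    ext i; fin_cases i <;> simp [Finsupp.single_apply]
  have key : C c * (X 0 ^ (v 0) * X 1 ^ (v 1)) = (monomial v c : MvPolynomial (Fin 2) ℝ) := by
    rw [X_pow_eq_monomial, X_pow_eq_monomial, monomial_mul, C_apply, monomial_mul,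
      zero_add, one_mul, mul_one, ← hv']
  rw [← key]
  exact good_basis _ _ hv c

lemma good_of_deg2 (F : MvPolynomial (Fin 2) ℝ) (hF : F.totalDegree ≤ 2) : Good F := by
  rw [F.as_sum]
  refine Finset.sum_induction _ Good (fun _ _ => good_add) good_zero ?_
  intro v hv
  apply good_monomial
  have h1 : v.sum (fun _ e => e) ≤ 2 := le_trans (le_totalDegree hv) hF
  have h2 : v.sum (fun _ e => e) = v 0 + v 1 := by
    rw [Finsupp.sum_fintype _ _ (fun _ => rfl), Fin.sum_univ_two]
  omega

/-- For a quadratic pencil (total degrees ≤ 2), the generalised Manin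
involution with `D = 2` is an involution wherever it is defined (i.e. wherever the
defining denominator `−G₂` is nonzero, at the point and at its image). -/
theorem manin_involution_is_involution_quadratic
    (Fa Fb : MvPolynomial (Fin 2) ℝ)
    (hFa : Fa.totalDegree ≤ 2) (hFb : Fb.totalDegree ≤ 2)
    (p w : ℝ × ℝ) (hG2 : G2 Fa Fb p w ≠ 0)
    (hG2' : G2 Fa Fb p (manin Fa Fb 2 p w) ≠ 0) :
    manin Fa Fb 2 p (manin Fa Fb 2 p w) = w := by
  have hdenl : ∀ w' : ℝ × ℝ, den Fa Fb 2 p w' = -(G2 Fa Fb p w') := by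
    intro w'; simp [den]
  set z : ℝ := 2 * G1 Fa Fb p w / den Fa Fb 2 p w with hzdef
  have hw'eq : manin Fa Fb 2 p w = w + z • (p - w) := rfl
  have hz : z = 2 * G1 Fa Fb p w / (-(G2 Fa Fb p w)) := by rw [hzdef, hdenl]
  obtain ⟨ea0, ea1, ea2⟩ := good_of_deg2 Fa hFa p w z
  obtain ⟨eb0, eb1, eb2⟩ := good_of_deg2 Fb hFb p w z
  clear_value z
  rw [hw'eq] at hG2' ⊢
  set w' : ℝ × ℝ := w + z • (p - w) with hw'
  set R : ℝ := d1 Fa p w * d2 Fb p w - d2 Fa p w * d1 Fb p w with hR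
  have eG1' : G1 Fa Fb p w' = (1 - z) *
      (G1 Fa Fb p w + z * G2 Fa Fb p w + z^2/2 * R) := by
    simp only [G1, G2, hR, ea0, ea1, ea2, eb0, eb1, eb2]; ring
  have eG2' : G2 Fa Fb p w' = (1 - z)^2 * (G2 Fa Fb p w + z * R) := by
    simp only [G2, hR, ea0, ea2, eb0, eb2]; ring
  rw [eG2'] at hG2'
  have h1z : (1 : ℝ) - z ≠ 0 := fun h => hG2' (by rw [h]; ring)
  have hQR : G2 Fa Fb p w + z * R ≠ 0 := fun h => hG2' (by rw [h]; ring)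
  have hzQ : z * G2 Fa Fb p w = -(2 * G1 Fa Fb p w) := by
    rw [hz, div_neg, neg_mul, div_mul_cancel₀ _ hG2]
  have hsplit : p - w' = (1 - z) • (p - w) := by
    rw [hw']
    ext <;> simp [Prod.fst_add, Prod.snd_add, Prod.fst_sub, Prod.snd_sub, smul_eq_mul] <;> ring
  have hz' : (2 * G1 Fa Fb p w' / den Fa Fb 2 p w') * (1 - z) = -z := by
    rw [hdenl, eG1', eG2']
    field_simp
    ring_nf
    linear_combination (-1 : ℝ) * hzQ
  show w' + (2 * G1 Fa Fb p w' / den Fa Fb 2 p w') • (p - w') = w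
  rw [hsplit, smul_smul, hz', hw']
  ext <;> simp [Prod.fst_add, Prod.snd_add, Prod.fst_sub, Prod.snd_sub, smul_eq_mul] <;> ring
end

section
/- Let F_a, F_b be real polynomials in two variables, let D ≥ 2 be a degree parameter, and let σ : ℝ² → ℝ² be an invertible affine map (so σ maps lines to lines) which is an involution, σ∘σ = id, and is a symmetry of the pencil: F_a∘σ = F_a and F_b∘σ = F_b. Let p ∈ ℝ² and let ι_p and ι_{σ(p)} denote the generalised Manin involutions with degree parameter D and involution points p and σ(p). Then σ intertwines the involutions: for every (u,v) at which the defining denominator of ι_p is nonzero, the defining denominator of ι_{σ(p)} at σ(u,v) is also nonzero and σ(ι_p(u,v)) = ι_{σ(p)}(σ(u,v)). Consequently, with ρ_p = σ∘ι_p, one has ι_{σ(p)}(ι_p(u,v)) = ρ_p(ρ_p(u,v)) wherever both sides are defined; that is, the map τ_p = ι_{σ(p)}∘ι_p admits the root ρ_p. -/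
open MvPolynomial

/-! ### Auxiliary machinery: restriction of a polynomial to a line -/

/-- The single-variable polynomial obtained by restricting `F` to the parametrised line
`t ↦ w + t • v`. -/
noncomputable def lineP (F : MvPolynomial (Fin 2) ℝ) (w v : ℝ × ℝ) : Polynomial ℝ :=
  aeval ![Polynomial.C w.1 + Polynomial.C v.1 * Polynomial.X,
          Polynomial.C w.2 + Polynomial.C v.2 * Polynomial.X] F

lemma lineP_eval (F : MvPolynomial (Fin 2) ℝ) (w v : ℝ × ℝ) (t : ℝ) :
    (lineP F w v).eval t = pev F (w + t • v) := by
  rw [lineP, pev]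
  rw [show (Polynomial.eval t ((aeval _ : MvPolynomial (Fin 2) ℝ →ₐ[ℝ] Polynomial ℝ) F)) =
      (Polynomial.aeval t : Polynomial ℝ →ₐ[ℝ] ℝ) (aeval _ F) from rfl]
  rw [comp_aeval_apply]
  rw [show (eval ![(w + t • v).1, (w + t • v).2] F) = aeval ![(w + t • v).1, (w + t • v).2] F
    from rfl]
  have hfun : (fun i => (Polynomial.aeval t)
      (![Polynomial.C w.1 + Polynomial.C v.1 * Polynomial.X,
         Polynomial.C w.2 + Polynomial.C v.2 * Polynomial.X] i))
      = ![(w + t • v).1, (w + t • v).2] := by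
    funext i
    fin_cases i <;> simp [Prod.fst_add, Prod.snd_add] <;> ring
  rw [hfun]

lemma derivative_aeval (s : Fin 2 → Polynomial ℝ) (F : MvPolynomial (Fin 2) ℝ) :
    Polynomial.derivative (aeval s F)
      = aeval s (pderiv 0 F) * Polynomial.derivative (s 0)
        + aeval s (pderiv 1 F) * Polynomial.derivative (s 1) := by
  induction F using MvPolynomial.induction_on with
  | C a => simp [pderiv_C]
  | add p q hp hq => simp only [map_add, Polynomial.derivative_add, hp, hq]; ring
  | mul_X p i hp =>
    fin_cases i <;>
      simp only [Fin.zero_eta, Fin.mk_one, Fin.isValue, map_mul, aeval_X,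
        Polynomial.derivative_mul, hp, pderiv_mul, pderiv_X,
        Pi.single_eq_same, Pi.single_eq_of_ne (by decide : (1:Fin 2) ≠ 0),
        Pi.single_eq_of_ne (by decide : (0:Fin 2) ≠ 1), map_add, map_one, map_zero,
        mul_one, mul_zero, add_zero, zero_add] <;> ring

lemma derivative_lineP (F : MvPolynomial (Fin 2) ℝ) (w v : ℝ × ℝ) :
    Polynomial.derivative (lineP F w v)
      = Polynomial.C v.1 * lineP (pderiv 0 F) w v + Polynomial.C v.2 * lineP (pderiv 1 F) w v := by
  rw [lineP, derivative_aeval]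
  simp only [Matrix.cons_val_zero, Matrix.cons_val_one, Matrix.head_cons,
    Polynomial.derivative_add, Polynomial.derivative_C, Polynomial.derivative_mul,
    Polynomial.derivative_X, mul_one, zero_add, add_zero, Polynomial.derivative_C_mul]
  rw [lineP, lineP]
  ring

lemma pderiv_comm' (i j : Fin 2) (F : MvPolynomial (Fin 2) ℝ) :
    pderiv i (pderiv j F) = pderiv j (pderiv i F) := by
  induction F using MvPolynomial.induction_on' with
  | add p q hp hq => simp [hp, hq]
  | monomial s a =>
    by_cases h : i = j
    · subst h; rfl
    · have hidx : s - Finsupp.single j 1 - Finsupp.single i 1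
          = s - Finsupp.single i 1 - Finsupp.single j 1 := by
        ext k
        simp only [Finsupp.tsub_apply, Finsupp.single_apply]
        split <;> split <;> omega
      have hval : a * (s j : ℝ) * (((s - Finsupp.single j 1 : Fin 2 →₀ ℕ) i : ℕ) : ℝ)
          = a * (s i : ℝ) * (((s - Finsupp.single i 1 : Fin 2 →₀ ℕ) j : ℕ) : ℝ) := by
        rw [Finsupp.tsub_apply, Finsupp.tsub_apply, Finsupp.single_apply,
          Finsupp.single_apply, if_neg h, if_neg (Ne.symm h), Nat.sub_zero, Nat.sub_zero]
        ring
      simp only [pderiv_monomial, hidx, hval]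

lemma d1_eq (F : MvPolynomial (Fin 2) ℝ) (p w : ℝ × ℝ) :
    d1 F p w = (Polynomial.derivative (lineP F w (p - w))).eval 0 := by
  rw [derivative_lineP]
  simp only [Polynomial.eval_add, Polynomial.eval_mul, Polynomial.eval_C, lineP_eval,
    zero_smul, add_zero, d1, Prod.fst_sub, Prod.snd_sub]

lemma d2_eq (F : MvPolynomial (Fin 2) ℝ) (p w : ℝ × ℝ) :
    d2 F p w
      = (Polynomial.derivative (Polynomial.derivative (lineP F w (p - w)))).eval 0 := by
  rw [derivative_lineP, Polynomial.derivative_add, Polynomial.derivative_C_mul,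
    Polynomial.derivative_C_mul, derivative_lineP, derivative_lineP,
    pderiv_comm' (0 : Fin 2) (1 : Fin 2) F]
  simp only [Polynomial.eval_add, Polynomial.eval_mul, Polynomial.eval_C, lineP_eval,
    zero_smul, add_zero, d2, Prod.fst_sub, Prod.snd_sub]
  ring

lemma sigma_line (σ : (ℝ × ℝ) ≃ᵃ[ℝ] (ℝ × ℝ)) (w p : ℝ × ℝ) (t : ℝ) :
    σ (w + t • (p - w)) = σ w + t • (σ p - σ w) := by
  have h := σ.toAffineMap.apply_lineMap w p t
  simp only [AffineMap.lineMap_apply_module', AffineEquiv.coe_toAffineMap] at h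
  rw [add_comm] at h
  rw [h, add_comm]

lemma lineP_sigma (σ : (ℝ × ℝ) ≃ᵃ[ℝ] (ℝ × ℝ)) (F : MvPolynomial (Fin 2) ℝ)
    (hs : ∀ w : ℝ × ℝ, pev F (σ w) = pev F w) (p w : ℝ × ℝ) :
    lineP F (σ w) (σ p - σ w) = lineP F w (p - w) := by
  apply Polynomial.funext
  intro t
  rw [lineP_eval, lineP_eval, ← sigma_line, hs]

lemma d1_sigma (σ : (ℝ × ℝ) ≃ᵃ[ℝ] (ℝ × ℝ)) (F : MvPolynomial (Fin 2) ℝ)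
    (hs : ∀ w : ℝ × ℝ, pev F (σ w) = pev F w) (p w : ℝ × ℝ) :
    d1 F (σ p) (σ w) = d1 F p w := by
  rw [d1_eq, d1_eq, ← lineP_sigma σ F hs p w]

lemma d2_sigma (σ : (ℝ × ℝ) ≃ᵃ[ℝ] (ℝ × ℝ)) (F : MvPolynomial (Fin 2) ℝ)
    (hs : ∀ w : ℝ × ℝ, pev F (σ w) = pev F w) (p w : ℝ × ℝ) :
    d2 F (σ p) (σ w) = d2 F p w := by
  rw [d2_eq, d2_eq, ← lineP_sigma σ F hs p w]

section Main

variable (Fa Fb : MvPolynomial (Fin 2) ℝ) (D : ℕ) (σ : (ℝ × ℝ) ≃ᵃ[ℝ] (ℝ × ℝ))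
variable (hsa : ∀ w : ℝ × ℝ, pev Fa (σ w) = pev Fa w)
variable (hsb : ∀ w : ℝ × ℝ, pev Fb (σ w) = pev Fb w)

include hsa hsb

lemma G1_sigma (p w : ℝ × ℝ) : G1 Fa Fb (σ p) (σ w) = G1 Fa Fb p w := by
  rw [G1, G1, d1_sigma σ Fa hsa, d1_sigma σ Fb hsb, hsa, hsb]

lemma G2_sigma (p w : ℝ × ℝ) : G2 Fa Fb (σ p) (σ w) = G2 Fa Fb p w := by
  rw [G2, G2, d2_sigma σ Fa hsa, d2_sigma σ Fb hsb, hsa, hsb]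

lemma den_sigma (p w : ℝ × ℝ) : den Fa Fb D (σ p) (σ w) = den Fa Fb D p w := by
  rw [den, den, G1_sigma Fa Fb σ hsa hsb, G2_sigma Fa Fb σ hsa hsb]

lemma manin_sigma (p w : ℝ × ℝ) :
    σ (manin Fa Fb D p w) = manin Fa Fb D (σ p) (σ w) := by
  rw [manin, manin, sigma_line, G1_sigma Fa Fb σ hsa hsb, den_sigma Fa Fb D σ hsa hsb]

end Main

/-- if `σ` is an invertible affine involution of the plane which is a
symmetry of the pencil (`F_a∘σ = F_a`, `F_b∘σ = F_b`), then `σ` intertwines the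
generalised Manin involutions, `σ ∘ ι_p = ι_{σ(p)} ∘ σ`, and consequently
`τ_p = ι_{σ(p)} ∘ ι_p` admits the root `ρ_p = σ ∘ ι_p`. -/
theorem symmetry_switch_gives_root
    (Fa Fb : MvPolynomial (Fin 2) ℝ) (D : ℕ) (hD : 2 ≤ D)
    (σ : (ℝ × ℝ) ≃ᵃ[ℝ] (ℝ × ℝ))
    (hinv : ∀ w : ℝ × ℝ, σ (σ w) = w)
    (hsa : ∀ w : ℝ × ℝ, pev Fa (σ w) = pev Fa w)
    (hsb : ∀ w : ℝ × ℝ, pev Fb (σ w) = pev Fb w)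
    (p w : ℝ × ℝ)
    (h1 : den Fa Fb D p w ≠ 0)
    (h2 : den Fa Fb D (σ p) (manin Fa Fb D p w) ≠ 0)
    (h3 : den Fa Fb D p (σ (manin Fa Fb D p w)) ≠ 0) :
    (den Fa Fb D (σ p) (σ w) ≠ 0 ∧
        σ (manin Fa Fb D p w) = manin Fa Fb D (σ p) (σ w)) ∧
      manin Fa Fb D (σ p) (manin Fa Fb D p w) =
        σ (manin Fa Fb D p (σ (manin Fa Fb D p w))) := by
  refine ⟨⟨?_, manin_sigma Fa Fb D σ hsa hsb p w⟩, ?_⟩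
  · rw [den_sigma Fa Fb D σ hsa hsb]
    exact h1
  · rw [manin_sigma Fa Fb D σ hsa hsb p (σ (manin Fa Fb D p w)), hinv]
end
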